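/- Let f be a density on ℝⁿ with limit a > 0 at infinity and with isoperimetric profile 𝔍. Suppose F is a bounded isoperimetric set of weighted volume |F|_f = V − Ṽ with 𝔍(V) ≥ P_f(F) + n(ωₙ a)^{1/n} Ṽ^{(n-1)/n}, and suppose B is a ball disjoint from F with |B|_f = Ṽ and mean density at most a, i.e. P_f(B) ≤ n(ωₙ a)^{1/n} Ṽ^{(n-1)/n}. Then F ∪ B is an isoperimetric set of volume V: P_f(F ∪ B) = 𝔍(V). -/

import Mathlib

open MeasureTheory Metric Filter Set
open scoped ENNReal

noncomputable section

/-- Lebesgue measure of the unit ball in ℝⁿ (the constant ωₙ). -/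
def unitBallVol (n : ℕ) : ℝ := (volume (ball (0 : EuclideanSpace ℝ (Fin n)) 1)).toReal

/-- The essential boundary of a set `F ⊆ ℝⁿ`: points where the Lebesgue density of `F`
is neither 0 nor 1. -/
def essBoundary {n : ℕ} (F : Set (EuclideanSpace ℝ (Fin n))) :
    Set (EuclideanSpace ℝ (Fin n)) :=
  {x | ¬ Tendsto (fun r : ℝ => volume (F ∩ ball x r) / volume (ball x r))
        (nhdsWithin 0 (Ioi 0)) (nhds 0) ∧
       ¬ Tendsto (fun r : ℝ => volume (F ∩ ball x r) / volume (ball x r))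
        (nhdsWithin 0 (Ioi 0)) (nhds 1)}

/-- Weighted volume `|E|_f = ∫_E f`. -/
def wVol {n : ℕ} (f : EuclideanSpace ℝ (Fin n) → ℝ) (E : Set (EuclideanSpace ℝ (Fin n))) : ℝ≥0∞ :=
  ∫⁻ x in E, ENNReal.ofReal (f x)

/-- Weighted perimeter `P_f(E) = ∫_{∂*E} f dH^{n-1}`. -/
def wPer {n : ℕ} (f : EuclideanSpace ℝ (Fin n) → ℝ) (E : Set (EuclideanSpace ℝ (Fin n))) : ℝ≥0∞ :=
  ∫⁻ x in essBoundary E, ENNReal.ofReal (f x) ∂(μH[(n : ℝ) - 1])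

/-- The isoperimetric profile `𝔍_f(V) = inf { P_f(E) : |E|_f = V }`. -/
def isoProfile {n : ℕ} (f : EuclideanSpace ℝ (Fin n) → ℝ) (V : ℝ≥0∞) : ℝ≥0∞ :=
  sInf {p | ∃ E : Set (EuclideanSpace ℝ (Fin n)), MeasurableSet E ∧ wVol f E = V ∧ wPer f E = p}

/-- A density on ℝⁿ is non-decreasing if it is non-decreasing along every ray from the origin. -/
def RayNondecreasing {n : ℕ} (f : EuclideanSpace ℝ (Fin n) → ℝ) : Prop :=
  ∀ θ : EuclideanSpace ℝ (Fin n), ‖θ‖ = 1 → MonotoneOn (fun t : ℝ => f (t • θ)) (Set.Ici 0)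

lemma mem_essB_congr {n : ℕ} {F G : Set (EuclideanSpace ℝ (Fin n))} {x}
    (h : ∀ᶠ r in nhdsWithin (0:ℝ) (Ioi 0), F ∩ ball x r = G ∩ ball x r) :
    x ∈ essBoundary F ↔ x ∈ essBoundary G := by
  have hEq : (fun r : ℝ => volume (F ∩ ball x r) / volume (ball x r))
      =ᶠ[nhdsWithin (0:ℝ) (Ioi 0)]
      (fun r : ℝ => volume (G ∩ ball x r) / volume (ball x r)) :=
    h.mono fun r hr => by simp only [hr]
  simp only [essBoundary, mem_setOf_eq, tendsto_congr' hEq]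

lemma essB_subset_closure {n : ℕ} (F : Set (EuclideanSpace ℝ (Fin n))) :
    essBoundary F ⊆ closure F := by
  intro x hx
  by_contra hxc
  obtain ⟨ε, hε, hball⟩ := Metric.isOpen_iff.1 isClosed_closure.isOpen_compl x hxc
  apply hx.1
  have hev : ∀ᶠ r in nhdsWithin (0:ℝ) (Ioi 0),
      volume (F ∩ ball x r) / volume (ball x r) = 0 := by
    filter_upwards [Ioo_mem_nhdsGT_of_mem (Set.mem_Ico.2 ⟨le_refl 0, hε⟩)] with s hs
    have : F ∩ ball x s = ∅ := by
      apply eq_empty_of_forall_notMem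
      intro y hy
      exact hball (ball_subset_ball hs.2.le hy.2) (subset_closure hy.1)
    simp [this]
  have hev' : (fun r : ℝ => volume (F ∩ ball x r) / volume (ball x r))
      =ᶠ[nhdsWithin (0:ℝ) (Ioi 0)] (fun _ => (0:ℝ≥0∞)) := hev
  exact Tendsto.congr' hev'.symm tendsto_const_nhds

lemma eventually_union_inter {n : ℕ} {B F : Set (EuclideanSpace ℝ (Fin n))} {x}
    (hx : x ∉ closure B) :
    ∀ᶠ r in nhdsWithin (0:ℝ) (Ioi 0), (F ∪ B) ∩ ball x r = F ∩ ball x r := by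
  obtain ⟨ε, hε, hball⟩ := Metric.isOpen_iff.1 isClosed_closure.isOpen_compl x hx
  filter_upwards [Ioo_mem_nhdsGT_of_mem (Set.mem_Ico.2 ⟨le_refl 0, hε⟩)] with s hs
  ext y
  constructor
  · rintro ⟨hy1 | hy1, hy2⟩
    · exact ⟨hy1, hy2⟩
    · exact absurd (subset_closure hy1)
        (hball (ball_subset_ball hs.2.le hy2))
  · rintro ⟨hy1, hy2⟩; exact ⟨Or.inl hy1, hy2⟩

lemma essB_union {n : ℕ} {F B : Set (EuclideanSpace ℝ (Fin n))}
    (hd : closure F ∩ closure B = ∅) :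
    essBoundary (F ∪ B) = essBoundary F ∪ essBoundary B := by
  ext x
  by_cases hxF : x ∈ closure F
  · have hxB : x ∉ closure B := fun h =>
      (eq_empty_iff_forall_notMem.1 hd x) ⟨hxF, h⟩
    have h1 := mem_essB_congr (F := F ∪ B) (G := F) (eventually_union_inter hxB)
    have h2 : x ∉ essBoundary B := fun h => hxB (essB_subset_closure B h)
    simp [h1, h2, mem_union]
  · by_cases hxB : x ∈ closure B
    · have h1 := mem_essB_congr (F := F ∪ B) (G := B)
        (by rw [union_comm]; exact eventually_union_inter hxF)
      have h2 : x ∉ essBoundary F := fun h => hxF (essB_subset_closure F h)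
      simp [h1, h2, mem_union]
    · have hxU : x ∉ closure (F ∪ B) := by
        rw [closure_union]; rintro (h | h) <;> [exact hxF h; exact hxB h]
      have h1 : x ∉ essBoundary (F ∪ B) := fun h => hxU (essB_subset_closure _ h)
      have h2 : x ∉ essBoundary F := fun h => hxF (essB_subset_closure F h)
      have h3 : x ∉ essBoundary B := fun h => hxB (essB_subset_closure B h)
      simp [h1, h2, h3]

/-- If `F` is a bounded isoperimetric set of weighted volume `V − Ṽ` with
`𝔍(V) ≥ P_f(F) + n (ωₙ a)^{1/n} Ṽ^{(n-1)/n}`, and `B` is a ball disjoint from `F` (with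
disjoint closures) of weighted volume `Ṽ` and mean density at most `a`, then `F ∪ B` is an
isoperimetric set of volume `V`. -/
theorem union_with_far_ball_is_isoperimetric {n : ℕ} (hn : 2 ≤ n)
    (f : EuclideanSpace ℝ (Fin n) → ℝ) (hpos : ∀ x, 0 < f x)
    (hlsc : LowerSemicontinuous f) (a : ℝ) (ha : 0 < a)
    (hlim : Tendsto f (cocompact (EuclideanSpace ℝ (Fin n))) (nhds a))
    (F : Set (EuclideanSpace ℝ (Fin n))) (hFmeas : MeasurableSet F)
    (hFbdd : Bornology.IsBounded F)
    (x₀ : EuclideanSpace ℝ (Fin n)) (r : ℝ) (hr : 0 < r)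
    (V Vt : ℝ) (hVt : 0 ≤ Vt) (hVtV : Vt ≤ V)
    (hvolF : wVol f F = ENNReal.ofReal (V - Vt))
    (hFiso : wPer f F = isoProfile f (ENNReal.ofReal (V - Vt)))
    (hprofile : wPer f F +
        ENNReal.ofReal ((n : ℝ) * (unitBallVol n * a) ^ ((1 : ℝ) / n) *
          Vt ^ (((n : ℝ) - 1) / n)) ≤ isoProfile f (ENNReal.ofReal V))
    (hdisj : closure F ∩ closure (closedBall x₀ r) = ∅)
    (hvolB : wVol f (closedBall x₀ r) = ENNReal.ofReal Vt)
    (hperB : wPer f (closedBall x₀ r) ≤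
        ENNReal.ofReal ((n : ℝ) * (unitBallVol n * a) ^ ((1 : ℝ) / n) *
          Vt ^ (((n : ℝ) - 1) / n))) :
    wPer f (F ∪ closedBall x₀ r) = isoProfile f (ENNReal.ofReal V) := by
  set B := closedBall x₀ r with hB
  have hBclosed : IsClosed B := Metric.isClosed_closedBall
  have hdisj' : closure F ∩ closure B = ∅ := hdisj
  have hFB : Disjoint F B := by
    rw [Set.disjoint_iff_inter_eq_empty]
    apply eq_empty_of_forall_notMem
    intro y hy
    exact (eq_empty_iff_forall_notMem.1 hdisj' y)
      ⟨subset_closure hy.1, subset_closure hy.2⟩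
  have hvolU : wVol f (F ∪ B) = ENNReal.ofReal V := by
    have : wVol f (F ∪ B) = wVol f F + wVol f B :=
      lintegral_union hBclosed.measurableSet hFB
    rw [this, hvolF, hvolB, ← ENNReal.ofReal_add (sub_nonneg.2 hVtV) hVt,
      sub_add_cancel]
  have hperU : wPer f (F ∪ B) = wPer f F + wPer f B := by
    unfold wPer
    rw [essB_union hdisj']
    have ht : MeasurableSet (closure B) := isClosed_closure.measurableSet
    have h1 : (essBoundary F ∪ essBoundary B) ∩ closure B = essBoundary B := by
      apply Subset.antisymm
      · rintro y ⟨hy1 | hy1, hy2⟩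
        · exact absurd ⟨essB_subset_closure F hy1, hy2⟩
            (eq_empty_iff_forall_notMem.1 hdisj' y)
        · exact hy1
      · intro y hy; exact ⟨Or.inr hy, essB_subset_closure B hy⟩
    have h2 : (essBoundary F ∪ essBoundary B) \ closure B = essBoundary F := by
      apply Subset.antisymm
      · rintro y ⟨hy1 | hy1, hy2⟩
        · exact hy1
        · exact absurd (essB_subset_closure B hy1) hy2
      · intro y hy
        refine ⟨Or.inl hy, fun hc =>
          (eq_empty_iff_forall_notMem.1 hdisj' y) ⟨essB_subset_closure F hy, hc⟩⟩
    rw [← lintegral_inter_add_diff (fun x => ENNReal.ofReal (f x))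
      (essBoundary F ∪ essBoundary B) ht, h1, h2, add_comm]
  apply le_antisymm
  · rw [hperU]
    calc wPer f F + wPer f B ≤ wPer f F +
          ENNReal.ofReal ((n : ℝ) * (unitBallVol n * a) ^ ((1 : ℝ) / n) *
            Vt ^ (((n : ℝ) - 1) / n)) := add_le_add_right hperB _
      _ ≤ isoProfile f (ENNReal.ofReal V) := hprofile
  · exact sInf_le ⟨F ∪ B, hFmeas.union hBclosed.measurableSet, hvolU, rfl⟩


end
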